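/- Let ω ∈ (0,1] and f ∈ [0,1]. Define f'(p) = f if p < ω and f'(p) = 1 − f if p ≥ ω, and Ω(p, f) = (e − f'(p))^{ω − p}. Then p ↦ Ω(p, f) is Lipschitz continuous on [0,1] with Lipschitz constant e, i.e., |Ω(p₁, f) − Ω(p₂, f)| ≤ e·|p₁ − p₂| for all p₁, p₂ ∈ [0,1]. -/

import Mathlib

lemma aux_rpow_lip (b ω : ℝ) (hb1 : 1 ≤ b) (hbe : b ≤ Real.exp 1) (hω : ω ≤ 1)
    {x y : ℝ} (hx : x ∈ Set.Icc (0:ℝ) 1) (hy : y ∈ Set.Icc (0:ℝ) 1) :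
    |b ^ (ω - x) - b ^ (ω - y)| ≤ Real.exp 1 * |x - y| := by
  have hb0 : (0:ℝ) < b := lt_of_lt_of_le one_pos hb1
  have key := (convex_Icc (0:ℝ) 1).norm_image_sub_le_of_norm_hasDerivWithin_le
    (f := fun p : ℝ => b ^ (ω - p)) (f' := fun p : ℝ => b ^ (ω - p) * Real.log b * (-1))
    (C := Real.exp 1)
    (fun p _ => by
      have h1 : HasDerivAt (fun p : ℝ => ω - p) (-1) p := by
        exact (hasDerivAt_id p).const_sub ω
      exact (((Real.hasStrictDerivAt_const_rpow hb0 (ω - p)).hasDerivAt.comp p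
        h1)).hasDerivWithinAt)
    (fun p hp => by
      have hlog0 : 0 ≤ Real.log b := Real.log_nonneg hb1
      have hlog1 : Real.log b ≤ 1 := by
        calc Real.log b ≤ Real.log (Real.exp 1) := Real.log_le_log hb0 hbe
        _ = 1 := Real.log_exp 1
      have hr0 : 0 ≤ b ^ (ω - p) := (Real.rpow_pos_of_pos hb0 _).le
      have hre : b ^ (ω - p) ≤ Real.exp 1 := by
        calc b ^ (ω - p) ≤ b ^ (1:ℝ) :=
          Real.rpow_le_rpow_of_exponent_le hb1 (by linarith [hp.1])
        _ = b := Real.rpow_one b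
        _ ≤ Real.exp 1 := hbe
      have : ‖b ^ (ω - p) * Real.log b * (-1)‖ = b ^ (ω - p) * Real.log b := by
        rw [norm_mul, norm_neg, norm_one, mul_one]
        exact abs_of_nonneg (mul_nonneg hr0 hlog0)
      rw [this]
      calc b ^ (ω - p) * Real.log b ≤ Real.exp 1 * 1 :=
        mul_le_mul hre hlog1 hlog0 (Real.exp_pos 1).le
      _ = Real.exp 1 := mul_one _)
    hx hy
  simpa [Real.norm_eq_abs, abs_sub_comm] using key

/-- The weighting `Ω(p, f) = (e − f'(p))^{ω − p}` is Lipschitz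
continuous on `[0,1]` with Lipschitz constant `e`. -/
theorem ccar_lipschitz
    (ω f : ℝ) (hω : ω ∈ Set.Ioc (0 : ℝ) 1) (hf : f ∈ Set.Icc (0 : ℝ) 1)
    (f' : ℝ → ℝ) (hf' : ∀ p, f' p = if p < ω then f else 1 - f)
    (Ω : ℝ → ℝ) (hΩ : ∀ p, Ω p = (Real.exp 1 - f' p) ^ (ω - p)) :
    ∀ p₁ ∈ Set.Icc (0 : ℝ) 1, ∀ p₂ ∈ Set.Icc (0 : ℝ) 1,
      |Ω p₁ - Ω p₂| ≤ Real.exp 1 * |p₁ - p₂| := by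
  have he : (2.7182818283 : ℝ) < Real.exp 1 := Real.exp_one_gt_d9
  have hb1 : (1:ℝ) ≤ Real.exp 1 - f := by linarith [hf.2]
  have hb1' : (1:ℝ) ≤ Real.exp 1 - (1 - f) := by linarith [hf.1]
  have hbe : Real.exp 1 - f ≤ Real.exp 1 := by linarith [hf.1]
  have hbe' : Real.exp 1 - (1 - f) ≤ Real.exp 1 := by linarith [hf.2]
  have hωm : ω ∈ Set.Icc (0:ℝ) 1 := ⟨hω.1.le, hω.2⟩
  intro p₁ hp₁ p₂ hp₂
  wlog h : p₁ ≤ p₂ with H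
  · rw [abs_sub_comm (Ω p₁), abs_sub_comm p₁]
    exact H ω f hω hf f' hf' Ω hΩ he hb1 hb1' hbe hbe' hωm p₂ hp₂ p₁ hp₁ (le_of_not_ge h)
  rcases lt_or_ge p₂ ω with h2 | h2
  · have h1 : p₁ < ω := lt_of_le_of_lt h h2
    rw [hΩ p₁, hΩ p₂, hf' p₁, hf' p₂, if_pos h1, if_pos h2]
    exact aux_rpow_lip _ ω hb1 hbe hω.2 hp₁ hp₂
  · rcases lt_or_ge p₁ ω with h1 | h1
    · rw [hΩ p₁, hΩ p₂, hf' p₁, hf' p₂, if_pos h1, if_neg (not_lt.mpr h2)]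
      have e1 := aux_rpow_lip (Real.exp 1 - f) ω hb1 hbe hω.2 hp₁ hωm
      have e2 := aux_rpow_lip (Real.exp 1 - (1 - f)) ω hb1' hbe' hω.2 hωm hp₂
      rw [sub_self, Real.rpow_zero] at e1 e2
      have a1 : |ω - p₁| = ω - p₁ := abs_of_nonneg (by linarith)
      have a2 : |ω - p₂| = p₂ - ω := by rw [abs_sub_comm]; exact abs_of_nonneg (by linarith)
      have a3 : |p₁ - p₂| = p₂ - p₁ := by rw [abs_sub_comm]; exact abs_of_nonneg (by linarith)
      rw [abs_sub_comm p₁ ω, a1] at e1; rw [a2] at e2; rw [a3]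
      calc |(Real.exp 1 - f) ^ (ω - p₁) - (Real.exp 1 - (1 - f)) ^ (ω - p₂)|
          ≤ |(Real.exp 1 - f) ^ (ω - p₁) - 1| + |1 - (Real.exp 1 - (1 - f)) ^ (ω - p₂)| :=
            abs_sub_le _ 1 _
        _ ≤ Real.exp 1 * (ω - p₁) + Real.exp 1 * (p₂ - ω) := add_le_add e1 e2
        _ = Real.exp 1 * (p₂ - p₁) := by ring
    · rw [hΩ p₁, hΩ p₂, hf' p₁, hf' p₂, if_neg (not_lt.mpr h1), if_neg (not_lt.mpr h2)]
      exact aux_rpow_lip _ ω hb1' hbe' hω.2 hp₁ hp₂
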